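/- Let f ∈ C_c^∞(0,τ;H) and u₀ ∈ H, and let u ∈ W¹₂(0,τ;V′) ∩ L₂(0,τ;V) be the solution, given by Lions's theorem, of u′(t) + 𝒜(t)u(t) = f(t) in V′ with u(0) = u₀. Then for almost every t ∈ (0,τ) the following identity holds in V′: u(t) = ∫₀ᵗ e^{−(t−s)𝒜(t)}(𝒜(t) − 𝒜(s))u(s) ds + ∫₀ᵗ e^{−(t−s)𝒜(t)} f(s) ds + e^{−t𝒜(t)}u₀. -/

import Mathlib

/- Acquistapace–Terreni representation formula (Haak–Ouhabaz, Lemma 2.3): if `u` is the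
Lions solution of `u' + 𝒜(·)u = f` in `V'`, `u(0) = u₀ ∈ H`, with
`f ∈ C_c^∞(0,τ;H)`, then for a.e. `t ∈ (0,τ)` one has, in `V'`,
`u(t) = ∫₀ᵗ e^{-(t-s)𝒜(t)} (𝒜(t) - 𝒜(s)) u(s) ds + ∫₀ᵗ e^{-(t-s)𝒜(t)} f(s) ds + e^{-t𝒜(t)} u₀`.

`V'` is realised as `V →L[ℂ] ℂ`; `dualEmb J : H → V'` is the canonical embedding; `𝒜(t)w`
is `a t w ∈ V'`.  The bounded holomorphic semigroup `e^{-s𝒜(t)}` is given as data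
`TV t : ℝ → V' →L[ℂ] V'` characterised by `IsSemigroupVdual`: semigroup law, strong
continuity on `[0,∞)`, uniform boundedness, and the generator identity
`d/ds e^{-s𝒜(t)}(w) = - e^{-s𝒜(t)} 𝒜(t) w` for `w ∈ V`.  The Lions solution is given by
`u : ℝ → V` (its `L₂(0,τ;V)` version), its `V'`-derivative `u'` and its continuous
`V'`-valued representative `U ∈ W¹₂(0,τ;V')`. -/

open MeasureTheory Set Filter
open scoped InnerProductSpace ENNReal Topology

noncomputable section

variable {V H : Type*}
  [NormedAddCommGroup V] [InnerProductSpace ℂ V] [CompleteSpace V]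
  [NormedAddCommGroup H] [InnerProductSpace ℂ H] [CompleteSpace H]

/-- The canonical embedding `H ↪ V' = (V →L[ℂ] ℂ)`, `h ↦ ⟪h, J ·⟫`. -/
def dualEmb (J : V →L[ℂ] H) (h : H) : V →L[ℂ] ℂ :=
  (innerSL ℂ h).comp J

/-- `T = (e^{-s𝒜})_{s ≥ 0}` is the bounded `C₀`-semigroup on `V' = (V →L[ℂ] ℂ)` generated
by `-𝒜`, where `𝒜 w = B w ∈ V'` for `w ∈ V` (domain `V ↪ V'`). -/
def IsSemigroupVdual (J : V →L[ℂ] H) (B : V →L⋆[ℂ] V →L[ℂ] ℂ)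
    (T : ℝ → (V →L[ℂ] ℂ) →L[ℂ] (V →L[ℂ] ℂ)) : Prop :=
  T 0 = ContinuousLinearMap.id ℂ (V →L[ℂ] ℂ) ∧
  (∀ s₁ s₂ : ℝ, 0 ≤ s₁ → 0 ≤ s₂ → T (s₁ + s₂) = (T s₁).comp (T s₂)) ∧
  (∀ φ : V →L[ℂ] ℂ, ContinuousOn (fun s => T s φ) (Ici 0)) ∧
  (∃ C : ℝ, ∀ s ∈ Ici (0:ℝ), ‖T s‖ ≤ C) ∧
  (∀ w : V, ∀ s ∈ Ici (0:ℝ),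
    HasDerivWithinAt (fun r => T r (dualEmb J (J w))) (-(T s (B w))) (Ici 0) s)

set_option linter.unusedSectionVars false


section Helpers

variable {E : Type*} [NormedAddCommGroup E] [NormedSpace ℝ E] [CompleteSpace E]

/-- Steklov averages converge in `L¹`. -/
lemma steklov_tendsto (F : ℝ → E) (b : ℝ) (hb : 0 < b) (hF : IntegrableOn F (Ioc 0 b)) :
    Tendsto (fun h : ℝ => ∫ s in Ioc 0 (b - h), ‖(h⁻¹ • ∫ r in s..(s+h), F r) - F s‖)
      (𝓝[>] (0:ℝ)) (𝓝 0) := by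
  set Fe : ℝ → E := (Ioc 0 b).indicator F with hFe_def
  have hFe : Integrable Fe volume := by
    rw [hFe_def, integrable_indicator_iff measurableSet_Ioc]; exact hF
  rw [Metric.tendsto_nhdsWithin_nhds]
  intro ε hε
  obtain ⟨G, hGsupp, hGclose, hGcont, hGint⟩ :=
    hFe.exists_hasCompactSupport_integral_sub_le (μ := volume) (ε := ε/8) (by positivity)
  set ϕ : ℝ → ℝ := fun r => ‖Fe r - G r‖ with hϕ_def
  have hϕint : Integrable ϕ volume := (hFe.sub hGint).norm
  have hϕnonneg : ∀ r, 0 ≤ ϕ r := fun r => norm_nonneg _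
  set Φ : ℝ → ℝ := fun x => ∫ r in (0:ℝ)..x, ϕ r with hΦ_def
  have hΦcont : Continuous Φ :=
    intervalIntegral.continuous_primitive (fun a b => hϕint.intervalIntegrable) 0
  have hΦdiff : ∀ x y : ℝ, Φ y - Φ x = ∫ r in x..y, ϕ r := fun x y =>
    intervalIntegral.integral_interval_sub_left hϕint.intervalIntegrable
      hϕint.intervalIntegrable
  have hΦmono : ∀ {x y : ℝ}, x ≤ y → Φ x ≤ Φ y := by
    intro x y hxy
    have h1 := hΦdiff x y
    have h2 : 0 ≤ ∫ r in x..y, ϕ r :=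
      intervalIntegral.integral_nonneg hxy (fun r _ => hϕnonneg r)
    linarith
  have hΦ0 : Φ 0 = 0 := intervalIntegral.integral_same
  have hΦb : Φ b ≤ ε/8 := by
    have h2 : ∫ r in Ioc (0:ℝ) b, ϕ r ≤ ∫ r, ϕ r :=
      setIntegral_le_integral hϕint (Eventually.of_forall hϕnonneg)
    have h1 : Φ b = ∫ r in Ioc (0:ℝ) b, ϕ r := intervalIntegral.integral_of_le hb.le
    linarith [hGclose]
  have hGuc : UniformContinuous G := hGsupp.uniformContinuous_of_continuous hGcont
  set ε₂ : ℝ := ε/(8*(b+1)) with hε₂_def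
  have hε₂pos : 0 < ε₂ := by positivity
  obtain ⟨δ, hδpos, hδ⟩ := Metric.uniformContinuous_iff.1 hGuc ε₂ hε₂pos
  refine ⟨min δ (b/2), by positivity, ?_⟩
  intro h hhmem hhd
  have hh : (0:ℝ) < h := hhmem
  rw [Real.dist_eq, sub_zero, abs_of_pos hh] at hhd
  have hhδ : h < δ := lt_of_lt_of_le hhd (min_le_left _ _)
  have hhb2 : h < b/2 := lt_of_lt_of_le hhd (min_le_right _ _)
  have hbh : (0:ℝ) ≤ b - h := by linarith
  have key : ∀ s ∈ Ioc (0:ℝ) (b-h), ‖(h⁻¹ • ∫ r in s..(s+h), F r) - F s‖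
      ≤ h⁻¹ * (Φ (s+h) - Φ s) + (ε₂ + ϕ s) := by
    intro s hs
    have hssh : s ≤ s + h := by linarith
    have hsub : Icc s (s+h) ⊆ Ioc 0 b := fun r hr =>
      ⟨lt_of_lt_of_le hs.1 hr.1, by have h2 := hr.2; have h3 := hs.2; linarith⟩
    have hFeF : ∀ r ∈ uIcc s (s+h), F r = Fe r := by
      intro r hr
      rw [uIcc_of_le hssh] at hr
      rw [hFe_def, indicator_of_mem (hsub hr)]
    have hFs : F s = Fe s := by
      rw [hFe_def, indicator_of_mem (hsub ⟨le_rfl, hssh⟩)]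
    rw [intervalIntegral.integral_congr hFeF, hFs]
    have hiFe : IntervalIntegrable Fe volume s (s+h) := hFe.intervalIntegrable
    have hiG : IntervalIntegrable G volume s (s+h) := hGint.intervalIntegrable
    have e1 : (∫ r in s..(s+h), Fe r)
        = (∫ r in s..(s+h), Fe r - G r) + ∫ r in s..(s+h), G r := by
      rw [intervalIntegral.integral_sub hiFe hiG]; abel
    have e2 : (∫ r in s..(s+h), G r - G s) = (∫ r in s..(s+h), G r) - h • G s := by
      rw [intervalIntegral.integral_sub hiG intervalIntegrable_const,
        intervalIntegral.integral_const, add_sub_cancel_left]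
    have expand : (h⁻¹ • ∫ r in s..(s+h), Fe r) - Fe s
        = (h⁻¹ • ∫ r in s..(s+h), Fe r - G r)
          + (h⁻¹ • ∫ r in s..(s+h), G r - G s) + (G s - Fe s) := by
      rw [e1, e2, smul_add, smul_sub, smul_smul, inv_mul_cancel₀ hh.ne', one_smul]
      abel
    rw [expand]
    have b1 : ‖h⁻¹ • ∫ r in s..(s+h), Fe r - G r‖ ≤ h⁻¹ * (Φ (s+h) - Φ s) := by
      rw [norm_smul, Real.norm_eq_abs, abs_of_pos (inv_pos.2 hh), hΦdiff s (s+h)]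
      exact mul_le_mul_of_nonneg_left
        (intervalIntegral.norm_integral_le_integral_norm hssh) (inv_pos.2 hh).le
    have b2 : ‖h⁻¹ • ∫ r in s..(s+h), G r - G s‖ ≤ ε₂ := by
      have hbd : ∀ x ∈ uIoc s (s+h), ‖G x - G s‖ ≤ ε₂ := by
        intro x hx
        rw [uIoc_of_le hssh] at hx
        have hd : dist x s < δ := by
          rw [Real.dist_eq, abs_of_pos (by linarith [hx.1] : 0 < x - s)]
          have := hx.2; linarith
        have h5 := hδ hd
        rw [dist_eq_norm] at h5
        exact h5.le
      have h6 := intervalIntegral.norm_integral_le_of_norm_le_const hbd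
      rw [norm_smul, Real.norm_eq_abs, abs_of_pos (inv_pos.2 hh)]
      have h3 : |s + h - s| = h := by rw [add_sub_cancel_left, abs_of_pos hh]
      rw [h3] at h6
      calc h⁻¹ * ‖∫ r in s..(s+h), G r - G s‖ ≤ h⁻¹ * (ε₂ * h) :=
            mul_le_mul_of_nonneg_left h6 (inv_pos.2 hh).le
        _ = ε₂ := by field_simp
    calc ‖(h⁻¹ • ∫ r in s..(s+h), Fe r - G r)
          + (h⁻¹ • ∫ r in s..(s+h), G r - G s) + (G s - Fe s)‖
        ≤ ‖h⁻¹ • ∫ r in s..(s+h), Fe r - G r‖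
          + ‖h⁻¹ • ∫ r in s..(s+h), G r - G s‖ + ‖G s - Fe s‖ := norm_add₃_le
      _ ≤ h⁻¹ * (Φ (s+h) - Φ s) + (ε₂ + ϕ s) := by
          have h7 : ‖G s - Fe s‖ = ϕ s := by rw [hϕ_def]; exact norm_sub_rev _ _
          linarith [b1, b2]
  -- integrate the bound
  have hT1cont : Continuous fun s => h⁻¹ * (Φ (s+h) - Φ s) :=
    continuous_const.mul ((hΦcont.comp (continuous_id.add continuous_const)).sub hΦcont)
  have hT1int : IntegrableOn (fun s => h⁻¹ * (Φ (s+h) - Φ s)) (Ioc 0 (b-h)) :=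
    hT1cont.integrableOn_Ioc
  have hrest : IntegrableOn (fun s => ε₂ + ϕ s) (Ioc 0 (b-h)) :=
    (integrable_const ε₂).add hϕint.integrableOn
  have hmono : (∫ s in Ioc 0 (b-h), ‖(h⁻¹ • ∫ r in s..(s+h), F r) - F s‖)
      ≤ ∫ s in Ioc 0 (b-h), (h⁻¹ * (Φ (s+h) - Φ s) + (ε₂ + ϕ s)) := by
    apply integral_mono_of_nonneg
    · exact Eventually.of_forall (fun s => norm_nonneg _)
    · exact hT1int.add hrest
    · rw [EventuallyLE, ae_restrict_iff' measurableSet_Ioc]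
      exact Eventually.of_forall key
  have hsplit : (∫ s in Ioc 0 (b-h), (h⁻¹ * (Φ (s+h) - Φ s) + (ε₂ + ϕ s)))
      = (∫ s in Ioc 0 (b-h), h⁻¹ * (Φ (s+h) - Φ s)) + ∫ s in Ioc 0 (b-h), (ε₂ + ϕ s) :=
    integral_add hT1int hrest
  have hΦii : ∀ x y : ℝ, IntervalIntegrable Φ volume x y :=
    fun x y => hΦcont.intervalIntegrable x y
  have hΦhii : ∀ x y : ℝ, IntervalIntegrable (fun s => Φ (s+h)) volume x y :=
    fun x y => (hΦcont.comp (continuous_id.add continuous_const)).intervalIntegrable x y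
  have hT1bound : (∫ s in Ioc 0 (b-h), h⁻¹ * (Φ (s+h) - Φ s)) ≤ ε/8 := by
    have e4 : (∫ s in Ioc 0 (b-h), (Φ (s+h) - Φ s))
        = (∫ s in (b-h)..b, Φ s) - ∫ s in (0:ℝ)..h, Φ s := by
      rw [← intervalIntegral.integral_of_le hbh,
        intervalIntegral.integral_sub (hΦhii 0 (b-h)) (hΦii 0 (b-h))]
      have e5 : (∫ s in (0:ℝ)..(b-h), Φ (s+h)) = ∫ s in h..b, Φ s := by
        rw [intervalIntegral.integral_comp_add_right (a := 0) (b := b-h) Φ h]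
        norm_num
      rw [e5]
      have a1 := intervalIntegral.integral_add_adjacent_intervals
        (hΦii h (b-h)) (hΦii (b-h) b)
      have a2 := intervalIntegral.integral_add_adjacent_intervals
        (hΦii 0 h) (hΦii h (b-h))
      linarith
    have hub : (∫ s in (b-h)..b, Φ s) ≤ h * Φ b := by
      have h8 := intervalIntegral.integral_mono_on (by linarith : b - h ≤ b)
        (hΦii (b-h) b) (intervalIntegrable_const (c := Φ b))
        (fun x hx => hΦmono hx.2)
      rw [intervalIntegral.integral_const] at h8
      have : (b - (b - h)) • Φ b = h * Φ b := by rw [smul_eq_mul]; ring_nf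
      linarith [this ▸ h8]
    have hlb : 0 ≤ ∫ s in (0:ℝ)..h, Φ s :=
      intervalIntegral.integral_nonneg hh.le (fun x hx => hΦ0 ▸ hΦmono hx.1)
    have e6 : (∫ s in Ioc 0 (b-h), h⁻¹ * (Φ (s+h) - Φ s))
        = h⁻¹ * ∫ s in Ioc 0 (b-h), (Φ (s+h) - Φ s) := integral_const_mul h⁻¹ _
    rw [e6, e4]
    have : h⁻¹ * ((∫ s in (b-h)..b, Φ s) - ∫ s in (0:ℝ)..h, Φ s) ≤ h⁻¹ * (h * Φ b) :=
      mul_le_mul_of_nonneg_left (by linarith) (inv_pos.2 hh).le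
    have h9 : h⁻¹ * (h * Φ b) = Φ b := by field_simp
    linarith
  have hrestbound : (∫ s in Ioc 0 (b-h), (ε₂ + ϕ s)) ≤ ε/8 + ε/8 := by
    have e7 : (∫ s in Ioc 0 (b-h), (ε₂ + ϕ s))
        = (∫ _ in Ioc 0 (b-h), ε₂) + ∫ s in Ioc 0 (b-h), ϕ s :=
      integral_add (integrable_const ε₂) hϕint.integrableOn
    have e8 : (∫ _ in Ioc (0:ℝ) (b-h), ε₂) = (b - h) * ε₂ := by
      rw [setIntegral_const, Real.volume_real_Ioc_of_le (by linarith), smul_eq_mul, sub_zero]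
    have h10 : (b - h) * ε₂ ≤ ε/8 := by
      have : (b - h) * ε₂ ≤ (b + 1) * ε₂ := by nlinarith
      have h11 : (b + 1) * ε₂ = ε/8 := by
        rw [hε₂_def]; field_simp
      linarith
    have h12 : (∫ s in Ioc 0 (b-h), ϕ s) ≤ ∫ s, ϕ s :=
      setIntegral_le_integral hϕint (Eventually.of_forall hϕnonneg)
    linarith [hGclose]
  have hnn : 0 ≤ ∫ s in Ioc 0 (b-h), ‖(h⁻¹ • ∫ r in s..(s+h), F r) - F s‖ :=
    integral_nonneg (fun s => norm_nonneg _)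
  rw [Real.dist_eq, sub_zero, abs_of_nonneg hnn]
  calc (∫ s in Ioc 0 (b-h), ‖(h⁻¹ • ∫ r in s..(s+h), F r) - F s‖)
      ≤ _ := hmono
    _ ≤ ε/8 + (ε/8 + ε/8) := by rw [hsplit]; linarith
    _ < ε := by linarith

end Helpers


section SG

variable {X : Type*} [NormedAddCommGroup X] [NormedSpace ℂ X] [CompleteSpace X]

/-- a.e.-strong measurability of `s ↦ T (t-s) (ψ s)` for a strongly continuous family `T`. -/
lemma aesm_sg_comp (T : ℝ → X →L[ℂ] X) (t : ℝ)
    (hTc : ∀ φ : X, ContinuousOn (fun r => T r φ) (Ici 0))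
    (ψ : ℝ → X) (hψ : AEStronglyMeasurable ψ (volume.restrict (Ioc 0 t))) :
    AEStronglyMeasurable (fun s => T (t - s) (ψ s)) (volume.restrict (Ioc 0 t)) := by
  have hmap : MapsTo (fun s : ℝ => t - s) (Ioc 0 t) (Ici 0) := by
    intro s hs; simp only [mem_Ici, sub_nonneg]; exact hs.2
  have hcst : ∀ c : X, AEStronglyMeasurable (fun s => T (t - s) c)
      (volume.restrict (Ioc 0 t)) := by
    intro c
    have : ContinuousOn (fun s => T (t - s) c) (Ioc 0 t) :=
      (hTc c).comp ((continuous_const.sub continuous_id).continuousOn) hmap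
    exact this.aestronglyMeasurable measurableSet_Ioc
  obtain ⟨ψ₀, hψ₀, hae⟩ := hψ
  have hsimple : ∀ φ : SimpleFunc ℝ X,
      AEStronglyMeasurable (fun s => T (t - s) (φ s)) (volume.restrict (Ioc 0 t)) := by
    intro φ
    refine SimpleFunc.induction ?_ ?_ φ
    · intro c A hA
      have heq : (fun s => T (t - s) ((SimpleFunc.piecewise A hA
            (SimpleFunc.const ℝ c) (SimpleFunc.const ℝ (0:X))) s))
          = A.indicator (fun s => T (t - s) c) := by
        funext s
        by_cases hsA : s ∈ A
        · simp [SimpleFunc.piecewise_apply, hsA, indicator_of_mem]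
        · simp [SimpleFunc.piecewise_apply, hsA, indicator_of_notMem]
      rw [heq]
      exact (hcst c).indicator hA
    · intro φ₁ φ₂ _ h1 h2
      have heq : (fun s => T (t - s) ((φ₁ + φ₂) s))
          = fun s => T (t - s) (φ₁ s) + T (t - s) (φ₂ s) := by
        funext s; simp [map_add]
      rw [heq]
      exact h1.add h2
  have h0 : AEStronglyMeasurable (fun s => T (t - s) (ψ₀ s))
      (volume.restrict (Ioc 0 t)) := by
    apply aestronglyMeasurable_of_tendsto_ae atTop
      (f := fun n s => T (t - s) (hψ₀.approx n s))
    · exact fun n => hsimple _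
    · refine Eventually.of_forall (fun s => ?_)
      exact ((T (t - s)).continuous.tendsto _).comp (hψ₀.tendsto_approx s)
  exact h0.congr (by filter_upwards [hae] with s hs; rw [hs])

/-- Continuity of `s ↦ T (t-s) (ψ s)` on a set, given a uniform bound and strong continuity. -/
lemma contOn_sg_comp (T : ℝ → X →L[ℂ] X) (t C : ℝ)
    (hTc : ∀ φ : X, ContinuousOn (fun r => T r φ) (Ici 0))
    (hC : ∀ r ∈ Ici (0:ℝ), ‖T r‖ ≤ C)
    {S : Set ℝ} (hmap : ∀ s ∈ S, t - s ∈ Ici (0:ℝ))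
    {ψ : ℝ → X} (hψ : ContinuousOn ψ S) :
    ContinuousOn (fun s => T (t - s) (ψ s)) S := by
  intro s₀ hs₀
  have hmapsTo : MapsTo (fun s : ℝ => t - s) S (Ici 0) := fun s hs => hmap s hs
  have h2 : ContinuousWithinAt (fun s => T (t - s) (ψ s₀)) S s₀ :=
    ((hTc (ψ s₀)) (t - s₀) (hmap s₀ hs₀)).comp
      ((continuous_const.sub continuous_id).continuousWithinAt) hmapsTo
  have h1 : Tendsto (fun s => T (t - s) (ψ s - ψ s₀)) (𝓝[S] s₀) (𝓝 0) := by
    apply squeeze_zero_norm' (a := fun s => C * ‖ψ s - ψ s₀‖)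
    · filter_upwards [self_mem_nhdsWithin] with s hs
      calc ‖T (t - s) (ψ s - ψ s₀)‖ ≤ ‖T (t - s)‖ * ‖ψ s - ψ s₀‖ :=
            (T (t - s)).le_opNorm _
        _ ≤ C * ‖ψ s - ψ s₀‖ :=
            mul_le_mul_of_nonneg_right (hC _ (hmap s hs)) (norm_nonneg _)
    · have : Tendsto (fun s => ψ s - ψ s₀) (𝓝[S] s₀) (𝓝 0) := by
        have := hψ s₀ hs₀
        have h3 : Tendsto (fun s => ψ s - ψ s₀) (𝓝[S] s₀) (𝓝 (ψ s₀ - ψ s₀)) :=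
          this.sub tendsto_const_nhds
        rwa [sub_self] at h3
      have h4 : Tendsto (fun s => C * ‖ψ s - ψ s₀‖) (𝓝[S] s₀) (𝓝 (C * ‖(0:X)‖)) :=
        (tendsto_const_nhds.mul (tendsto_norm.comp this))
      simpa using h4
  have : Tendsto (fun s => T (t - s) (ψ s - ψ s₀) + T (t - s) (ψ s₀)) (𝓝[S] s₀)
      (𝓝 (0 + T (t - s₀) (ψ s₀))) := h1.add h2
  rw [zero_add] at this
  unfold ContinuousWithinAt
  convert this using 2 with s
  rw [← map_add]
  congr 1
  abel

/-- Differentiation of `s ↦ T (t-s) (φ s)` at a point where `φ` vanishes. -/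
lemma hasDerivAt_sg_comp (T : ℝ → X →L[ℂ] X) (t C : ℝ) {s₀ : ℝ}
    (hTc : ∀ φ : X, ContinuousOn (fun r => T r φ) (Ici 0))
    (hC : ∀ r ∈ Ici (0:ℝ), ‖T r‖ ≤ C)
    (hts₀ : 0 < t - s₀)
    {φ : ℝ → X} {d : X} (hφ : HasDerivAt φ d s₀) (hφ0 : φ s₀ = 0) :
    HasDerivAt (fun s => T (t - s) (φ s)) (T (t - s₀) d) s₀ := by
  rw [hasDerivAt_iff_isLittleO]
  have hev : ∀ᶠ s in 𝓝 s₀, t - s ∈ Ici (0:ℝ) := by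
    have : ∀ᶠ s in 𝓝 s₀, s < t := Filter.Tendsto.eventually_lt_const (by linarith) tendsto_id
    filter_upwards [this] with s hs
    simp only [mem_Ici, sub_nonneg]; exact hs.le
  have e₁ : (fun s => T (t - s) (φ s - (s - s₀) • d)) =o[𝓝 s₀] (fun s => s - s₀) := by
    have hinner : (fun s => φ s - (s - s₀) • d) =o[𝓝 s₀] (fun s => s - s₀) := by
      have := hasDerivAt_iff_isLittleO.1 hφ
      simpa [hφ0] using this
    have hO : (fun s => T (t - s) (φ s - (s - s₀) • d))
        =O[𝓝 s₀] (fun s => φ s - (s - s₀) • d) := by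
      rw [Asymptotics.isBigO_iff]
      refine ⟨C, ?_⟩
      filter_upwards [hev] with s hs
      calc ‖T (t - s) (φ s - (s - s₀) • d)‖ ≤ ‖T (t - s)‖ * ‖φ s - (s - s₀) • d‖ :=
            (T (t - s)).le_opNorm _
        _ ≤ C * ‖φ s - (s - s₀) • d‖ :=
            mul_le_mul_of_nonneg_right (hC _ hs) (norm_nonneg _)
    exact hO.trans_isLittleO hinner
  have e₂ : (fun s => (s - s₀) • (T (t - s) d - T (t - s₀) d)) =o[𝓝 s₀]
      (fun s => s - s₀) := by
    rw [Asymptotics.isLittleO_iff]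
    intro c hc
    have hcont : Tendsto (fun s => T (t - s) d) (𝓝 s₀) (𝓝 (T (t - s₀) d)) := by
      have h5 : ContinuousAt (fun r => T r d) (t - s₀) :=
        (hTc d).continuousAt (Ici_mem_nhds hts₀)
      exact h5.tendsto.comp ((continuous_const.sub continuous_id).tendsto s₀)
    have : Tendsto (fun s => ‖T (t - s) d - T (t - s₀) d‖) (𝓝 s₀) (𝓝 0) := by
      have h6 := hcont.sub (tendsto_const_nhds (x := T (t - s₀) d))
      rw [sub_self] at h6
      simpa [Function.comp_def] using tendsto_norm.comp h6
    filter_upwards [this.eventually_le_const hc] with s hs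
    rw [norm_smul, Real.norm_eq_abs, mul_comm]
    calc ‖T (t - s) d - T (t - s₀) d‖ * |s - s₀| ≤ c * |s - s₀| :=
          mul_le_mul_of_nonneg_right hs (abs_nonneg _)
      _ = c * ‖s - s₀‖ := by rw [Real.norm_eq_abs]
  have heq : (fun s => T (t - s) (φ s) - T (t - s₀) (φ s₀) - (s - s₀) • T (t - s₀) d)
      = fun s => T (t - s) (φ s - (s - s₀) • d)
          + (s - s₀) • (T (t - s) d - T (t - s₀) d) := by
    funext s
    rw [hφ0, map_zero, map_sub, (T (t - s)).map_smul_of_tower, smul_sub]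
    abel
  rw [heq]
  exact e₁.add e₂

end SG


section Avg

variable {X : Type*} [NormedAddCommGroup X] [NormedSpace ℝ X] [CompleteSpace X]

/-- Right averages at the left endpoint converge to the value. -/
lemma tendsto_avg_right {ψ : ℝ → X} {b : ℝ} (hb : 0 < b)
    (hψ : ContinuousOn ψ (Icc 0 b)) :
    Tendsto (fun h : ℝ => h⁻¹ • ∫ r in (0:ℝ)..h, ψ r) (𝓝[>] (0:ℝ)) (𝓝 (ψ 0)) := by
  rw [Metric.tendsto_nhdsWithin_nhds]
  intro ε hε
  have hcw : ContinuousWithinAt ψ (Icc 0 b) 0 := hψ 0 ⟨le_rfl, hb.le⟩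
  rw [ContinuousWithinAt, Metric.tendsto_nhdsWithin_nhds] at hcw
  obtain ⟨δ, hδpos, hδ⟩ := hcw (ε/2) (by positivity)
  refine ⟨min δ b, by positivity, ?_⟩
  intro h hh hhd
  have hh0 : (0:ℝ) < h := hh
  rw [Real.dist_eq, sub_zero, abs_of_pos hh0] at hhd
  have hhδ : h < δ := lt_of_lt_of_le hhd (min_le_left _ _)
  have hhb : h < b := lt_of_lt_of_le hhd (min_le_right _ _)
  have hint : IntervalIntegrable ψ volume 0 h :=
    (hψ.mono (by rw [uIcc_of_le hh0.le]; exact Icc_subset_Icc le_rfl hhb.le)).intervalIntegrable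
  have hbd : ∀ x ∈ uIoc (0:ℝ) h, ‖ψ x - ψ 0‖ ≤ ε/2 := by
    intro x hx
    rw [uIoc_of_le hh0.le] at hx
    have hmem : x ∈ Icc 0 b := ⟨hx.1.le, le_trans hx.2 hhb.le⟩
    have hd : dist x 0 < δ := by
      rw [Real.dist_eq, sub_zero, abs_of_pos hx.1]; linarith [hx.2]
    have := hδ hmem hd
    rw [dist_eq_norm] at this
    exact this.le
  have e1 : (h⁻¹ • ∫ r in (0:ℝ)..h, ψ r) - ψ 0 = h⁻¹ • ∫ r in (0:ℝ)..h, (ψ r - ψ 0) := by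
    rw [intervalIntegral.integral_sub hint intervalIntegrable_const,
      intervalIntegral.integral_const, smul_sub, sub_zero, smul_smul,
      inv_mul_cancel₀ hh0.ne', one_smul]
  rw [dist_eq_norm, e1, norm_smul, Real.norm_eq_abs, abs_of_pos (inv_pos.2 hh0)]
  have h2 := intervalIntegral.norm_integral_le_of_norm_le_const hbd
  rw [sub_zero, abs_of_pos hh0] at h2
  calc h⁻¹ * ‖∫ r in (0:ℝ)..h, (ψ r - ψ 0)‖ ≤ h⁻¹ * (ε/2 * h) :=
        mul_le_mul_of_nonneg_left h2 (inv_pos.2 hh0).le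
    _ = ε/2 := by field_simp
    _ < ε := by linarith

/-- Left averages at the right endpoint converge to the value. -/
lemma tendsto_avg_left {ψ : ℝ → X} {b : ℝ} (hb : 0 < b)
    (hψ : ContinuousOn ψ (Icc 0 b)) :
    Tendsto (fun h : ℝ => h⁻¹ • ∫ r in (b-h)..b, ψ r) (𝓝[>] (0:ℝ)) (𝓝 (ψ b)) := by
  rw [Metric.tendsto_nhdsWithin_nhds]
  intro ε hε
  have hcw : ContinuousWithinAt ψ (Icc 0 b) b := hψ b ⟨hb.le, le_rfl⟩
  rw [ContinuousWithinAt, Metric.tendsto_nhdsWithin_nhds] at hcw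
  obtain ⟨δ, hδpos, hδ⟩ := hcw (ε/2) (by positivity)
  refine ⟨min δ b, by positivity, ?_⟩
  intro h hh hhd
  have hh0 : (0:ℝ) < h := hh
  rw [Real.dist_eq, sub_zero, abs_of_pos hh0] at hhd
  have hhδ : h < δ := lt_of_lt_of_le hhd (min_le_left _ _)
  have hhb : h < b := lt_of_lt_of_le hhd (min_le_right _ _)
  have hle : b - h ≤ b := by linarith
  have hint : IntervalIntegrable ψ volume (b-h) b :=
    (hψ.mono (by rw [uIcc_of_le hle]; exact Icc_subset_Icc (by linarith) le_rfl)).intervalIntegrable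
  have hbd : ∀ x ∈ uIoc (b-h) b, ‖ψ x - ψ b‖ ≤ ε/2 := by
    intro x hx
    rw [uIoc_of_le hle] at hx
    have hmem : x ∈ Icc 0 b := ⟨by linarith [hx.1], hx.2⟩
    have hd : dist x b < δ := by
      rw [Real.dist_eq, abs_of_nonpos (by linarith [hx.2] : x - b ≤ 0)]
      have := hx.1; linarith
    have := hδ hmem hd
    rw [dist_eq_norm] at this
    exact this.le
  have e1 : (h⁻¹ • ∫ r in (b-h)..b, ψ r) - ψ b = h⁻¹ • ∫ r in (b-h)..b, (ψ r - ψ b) := by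
    rw [intervalIntegral.integral_sub hint intervalIntegrable_const,
      intervalIntegral.integral_const, smul_sub, smul_smul, sub_sub_cancel,
      inv_mul_cancel₀ hh0.ne', one_smul]
  rw [dist_eq_norm, e1, norm_smul, Real.norm_eq_abs, abs_of_pos (inv_pos.2 hh0)]
  have h2 := intervalIntegral.norm_integral_le_of_norm_le_const hbd
  rw [sub_sub_cancel, abs_of_pos hh0] at h2
  calc h⁻¹ * ‖∫ r in (b-h)..b, (ψ r - ψ b)‖ ≤ h⁻¹ * (ε/2 * h) :=
        mul_le_mul_of_nonneg_left h2 (inv_pos.2 hh0).le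
    _ = ε/2 := by field_simp
    _ < ε := by linarith

end Avg

section SGlim

variable {X : Type*} [NormedAddCommGroup X] [NormedSpace ℂ X]

/-- If `ψ h → ψ` then `T h (ψ h) → ψ` for a strongly continuous semigroup at `0`. -/
lemma tendsto_sg_apply (T : ℝ → X →L[ℂ] X) (C : ℝ)
    (hT0 : T 0 = ContinuousLinearMap.id ℂ X)
    (hTc : ∀ φ : X, ContinuousOn (fun r => T r φ) (Ici 0))
    (hC : ∀ r ∈ Ici (0:ℝ), ‖T r‖ ≤ C)
    {ψh : ℝ → X} {ψ : X} (hψh : Tendsto ψh (𝓝[>] (0:ℝ)) (𝓝 ψ)) :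
    Tendsto (fun h => T h (ψh h)) (𝓝[>] (0:ℝ)) (𝓝 ψ) := by
  rw [← tendsto_sub_nhds_zero_iff]
  have h1 : Tendsto (fun h => T h (ψh h - ψ)) (𝓝[>] (0:ℝ)) (𝓝 0) := by
    apply squeeze_zero_norm' (a := fun h => C * ‖ψh h - ψ‖)
    · filter_upwards [self_mem_nhdsWithin] with h hh
      calc ‖T h (ψh h - ψ)‖ ≤ ‖T h‖ * ‖ψh h - ψ‖ := (T h).le_opNorm _
        _ ≤ C * ‖ψh h - ψ‖ :=
          mul_le_mul_of_nonneg_right (hC h (show (0:ℝ) ≤ h from le_of_lt hh)) (norm_nonneg _)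
    · have h2 : Tendsto (fun h => ψh h - ψ) (𝓝[>] (0:ℝ)) (𝓝 0) := by
        have := hψh.sub (tendsto_const_nhds (x := ψ))
        rwa [sub_self] at this
      have h3 : Tendsto (fun h => C * ‖ψh h - ψ‖) (𝓝[>] (0:ℝ)) (𝓝 (C * ‖(0:X)‖)) :=
        tendsto_const_nhds.mul (tendsto_norm.comp h2)
      simpa using h3
  have h2 : Tendsto (fun h => T h ψ - ψ) (𝓝[>] (0:ℝ)) (𝓝 0) := by
    have h4 : Tendsto (fun h => T h ψ) (𝓝[Ici 0] (0:ℝ)) (𝓝 (T 0 ψ)) := hTc ψ 0 (by simp)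
    rw [hT0] at h4
    simp only [ContinuousLinearMap.id_apply] at h4
    have h5 : Tendsto (fun h => T h ψ) (𝓝[>] (0:ℝ)) (𝓝 ψ) :=
      h4.mono_left (nhdsWithin_mono 0 Ioi_subset_Ici_self)
    have := h5.sub (tendsto_const_nhds (x := ψ))
    rwa [sub_self] at this
  have := h1.add h2
  rw [add_zero] at this
  apply this.congr
  intro h
  rw [map_sub]
  abel

end SGlim

/-- The embedding `H → V'` as a real continuous linear map. -/
def dualEmbL (J : V →L[ℂ] H) : H →L[ℝ] (V →L[ℂ] ℂ) :=
  LinearMap.mkContinuous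
    { toFun := fun h => dualEmb J h
      map_add' := fun x y => by
        ext v; simp [dualEmb, inner_add_left]
      map_smul' := fun r x => by
        ext v
        simp only [dualEmb, ContinuousLinearMap.coe_comp', Function.comp_apply,
          innerSL_apply_apply, RingHom.id_apply, ContinuousLinearMap.coe_smul',
          Pi.smul_apply]
        rw [← Complex.coe_smul, inner_smul_left, Complex.conj_ofReal,
          Complex.real_smul] }
    ‖J‖
    (fun h => by
      refine le_trans (ContinuousLinearMap.opNorm_comp_le _ _) ?_
      rw [innerSL_apply_norm]
      exact le_of_eq (mul_comm _ _))

@[simp] lemma dualEmbL_apply (J : V →L[ℂ] H) (h : H) : dualEmbL J h = dualEmb J h := rfl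

set_option maxHeartbeats 1000000
set_option synthInstance.maxHeartbeats 400000

/-- **The Acquistapace–Terreni representation formula for the Lions solution.** -/
theorem acquistapace_terreni_representation
    (J : V →L[ℂ] H) (hJinj : Function.Injective J) (hJdense : DenseRange J)
    (τ : ℝ) (hτ : 0 < τ)
    (a : ℝ → V →L⋆[ℂ] V →L[ℂ] ℂ)
    (M : ℝ) (hM : 0 < M)
    (hbdd : ∀ t ∈ Icc (0:ℝ) τ, ∀ u v : V, ‖a t u v‖ ≤ M * ‖u‖ * ‖v‖)
    (α : ℝ) (hα : 0 < α)
    (hcoer : ∀ t ∈ Icc (0:ℝ) τ, ∀ u : V, α * ‖u‖ ^ 2 ≤ (a t u u).re)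
    -- the semigroups `e^{-s𝒜(t)}` on `V'`
    (TV : ℝ → ℝ → (V →L[ℂ] ℂ) →L[ℂ] (V →L[ℂ] ℂ))
    (hTV : ∀ t ∈ Icc (0:ℝ) τ, IsSemigroupVdual J (a t) (TV t))
    -- the data `f ∈ C_c^∞(0,τ;H)` and `u₀ ∈ H`
    (f : ℝ → H) (hf : ContDiff ℝ (⊤ : ℕ∞) f) (hfsupp : tsupport f ⊆ Ioo 0 τ)
    (u₀ : H)
    -- the Lions solution: `u ∈ L₂(0,τ;V)`, derivative `u' ∈ L₂(0,τ;V')`, continuous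
    -- representative `U ∈ W¹₂(0,τ;V')`, `U(0) = u₀`
    (u : ℝ → V) (u' : ℝ → V →L[ℂ] ℂ) (U : ℝ → V →L[ℂ] ℂ)
    (hu : MemLp u 2 (volume.restrict (Ioc 0 τ)))
    (hu' : MemLp u' 2 (volume.restrict (Ioc 0 τ)))
    (hU : ∀ t ∈ Icc (0:ℝ) τ, U t = dualEmb J u₀ + ∫ s in (0:ℝ)..t, u' s)
    (hUu : ∀ᵐ t ∂(volume.restrict (Ioc 0 τ)), U t = dualEmb J (J (u t)))
    (heq : ∀ᵐ t ∂(volume.restrict (Ioc 0 τ)),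
      u' t + (a t (u t) : V →L[ℂ] ℂ) = dualEmb J (f t)) :
    -- the representation formula, a.e. on `(0,τ)`, in `V'`:
    ∀ᵐ t ∂(volume.restrict (Ioc 0 τ)),
      U t = (∫ s in (0:ℝ)..t, TV t (t - s) ((a t (u s) : V →L[ℂ] ℂ) - a s (u s)))
        + (∫ s in (0:ℝ)..t, TV t (t - s) (dualEmb J (f s)))
        + TV t t (dualEmb J u₀) := by
  haveI : SecondCountableTopologyEither ℝ (V →L[ℂ] ℂ) := ⟨Or.inl inferInstance⟩
  haveI : IsFiniteMeasure (volume.restrict (Ioc (0:ℝ) τ)) := by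
    constructor
    rw [Measure.restrict_apply_univ, Real.volume_Ioc]
    exact ENNReal.ofReal_lt_top
  have hu_int : IntegrableOn u (Ioc 0 τ) volume := hu.integrable one_le_two
  have hu'_int : IntegrableOn u' (Ioc 0 τ) volume := hu'.integrable one_le_two
  have heq' : ∀ᵐ s ∂volume, s ∈ Ioc 0 τ →
      u' s + (a s (u s) : V →L[ℂ] ℂ) = dualEmb J (f s) :=
    (ae_restrict_iff' measurableSet_Ioc).1 heq
  have hUu' : ∀ᵐ s ∂volume, s ∈ Ioc 0 τ → U s = dualEmb J (J (u s)) :=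
    (ae_restrict_iff' measurableSet_Ioc).1 hUu
  rw [ae_restrict_iff' measurableSet_Ioc]
  refine Eventually.of_forall (fun t ht => ?_)
  obtain ⟨ht0, htτ⟩ := ht
  obtain ⟨hT0, hTadd, hTcont, ⟨C₀, hC₀⟩, hTder⟩ := hTV t ⟨ht0.le, htτ⟩
  set C : ℝ := max C₀ 1 with hC_def
  have hCpos : (0:ℝ) < C := lt_of_lt_of_le one_pos (le_max_right _ _)
  have hC : ∀ r ∈ Ici (0:ℝ), ‖TV t r‖ ≤ C := fun r hr =>
    (hC₀ r hr).trans (le_max_left _ _)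
  have hTop : ∀ r ∈ Ici (0:ℝ), ∀ x : V →L[ℂ] ℂ, ‖TV t r x‖ ≤ C * ‖x‖ := by
    intro r hr x
    exact ((TV t r).le_opNorm x).trans
      (mul_le_mul_of_nonneg_right (hC r hr) (norm_nonneg _))
  set K : V →L[ℝ] (V →L[ℂ] ℂ) := (dualEmbL J).comp (J.restrictScalars ℝ) with hK_def
  have hKapp : ∀ w : V, K w = dualEmb J (J w) := fun w => rfl
  have hMa : ∀ w : V, ‖(a t w : V →L[ℂ] ℂ)‖ ≤ M * ‖w‖ := by
    intro w
    refine ContinuousLinearMap.opNorm_le_bound _ (by positivity) (fun v => ?_)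
    have := hbdd t ⟨ht0.le, htτ⟩ w v
    linarith [this]
  -- interval integrability on subintervals of [0, τ]
  have hiiu : ∀ {x y : ℝ}, 0 ≤ x → 0 ≤ y → x ≤ τ → y ≤ τ →
      IntervalIntegrable u volume x y := by
    intro x y hx hy hxτ hyτ
    rw [intervalIntegrable_iff]
    exact hu_int.mono_set (fun r hr =>
      ⟨lt_of_le_of_lt (le_min hx hy) hr.1, hr.2.trans (max_le hxτ hyτ)⟩)
  have hiiu' : ∀ {x y : ℝ}, 0 ≤ x → 0 ≤ y → x ≤ τ → y ≤ τ →
      IntervalIntegrable u' volume x y := by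
    intro x y hx hy hxτ hyτ
    rw [intervalIntegrable_iff]
    exact hu'_int.mono_set (fun r hr =>
      ⟨lt_of_le_of_lt (le_min hx hy) hr.1, hr.2.trans (max_le hxτ hyτ)⟩)
  -- continuity of U on [0, τ]
  have hIccIoc : IntegrableOn u' (uIcc 0 τ) volume := by
    rw [uIcc_of_le hτ.le]
    exact (integrableOn_Icc_iff_integrableOn_Ioc (f := u')).2 hu'_int
  have hUcont : ContinuousOn U (Icc 0 τ) := by
    have hWcont : ContinuousOn (fun x => dualEmb J u₀ + ∫ s in (0:ℝ)..x, u' s)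
        (Icc 0 τ) := by
      apply continuousOn_const.add
      have := intervalIntegral.continuousOn_primitive_interval (a := 0) (b := τ)
        (μ := volume) hIccIoc
      rwa [uIcc_of_le hτ.le] at this
    exact hWcont.congr hU
  have hUIcc : IntegrableOn U (Icc 0 τ) volume := hUcont.integrableOn_Icc
  have hiiU : ∀ {x y : ℝ}, 0 ≤ x → 0 ≤ y → x ≤ τ → y ≤ τ →
      IntervalIntegrable U volume x y := by
    intro x y hx hy hxτ hyτ
    rw [intervalIntegrable_iff]
    exact hUIcc.mono_set (fun r hr =>
      ⟨(le_min hx hy).trans hr.1.le, hr.2.trans (max_le hxτ hyτ)⟩)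
  have hU0 : U 0 = dualEmb J u₀ := by
    rw [hU 0 ⟨le_rfl, hτ.le⟩, intervalIntegral.integral_same, add_zero]
  have hUdiff : ∀ {x y : ℝ}, 0 ≤ x → 0 ≤ y → x ≤ τ → y ≤ τ →
      U y - U x = ∫ r in x..y, u' r := by
    intro x y hx hy hxτ hyτ
    rw [hU y ⟨hy, hyτ⟩, hU x ⟨hx, hxτ⟩, add_sub_add_left_eq_sub]
    exact intervalIntegral.integral_interval_sub_left (hiiu' (le_refl 0) hy hτ.le hyτ)
      (hiiu' (le_refl 0) hx hτ.le hxτ)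
  -- integrability of the three main integrands on (0, t)
  have hu_t : AEStronglyMeasurable u (volume.restrict (Ioc 0 t)) :=
    hu.aestronglyMeasurable.mono_measure
      (Measure.restrict_mono (Ioc_subset_Ioc_right htτ) le_rfl)
  have hu'_t : AEStronglyMeasurable u' (volume.restrict (Ioc 0 t)) :=
    hu'.aestronglyMeasurable.mono_measure
      (Measure.restrict_mono (Ioc_subset_Ioc_right htτ) le_rfl)
  have hu_t_int : IntegrableOn u (Ioc 0 t) volume :=
    hu_int.mono_set (Ioc_subset_Ioc_right htτ)
  have hu'_t_int : IntegrableOn u' (Ioc 0 t) volume :=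
    hu'_int.mono_set (Ioc_subset_Ioc_right htτ)
  have hY_int : IntervalIntegrable (fun s => TV t (t - s) ((a t (u s) : V →L[ℂ] ℂ)))
      volume 0 t := by
    rw [intervalIntegrable_iff_integrableOn_Ioc_of_le ht0.le]
    apply Integrable.mono' (g := fun s => (C * M) * ‖u s‖)
    · exact (hu_t_int.norm.const_mul (C * M))
    · exact aesm_sg_comp (TV t) t hTcont _
        ((a t).continuous.comp_aestronglyMeasurable hu_t)
    · rw [ae_restrict_iff' measurableSet_Ioc]
      refine Eventually.of_forall (fun s hs => ?_)
      calc ‖TV t (t - s) ((a t (u s) : V →L[ℂ] ℂ))‖ ≤ C * ‖(a t (u s) : V →L[ℂ] ℂ)‖ :=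
            hTop _ (by simp only [mem_Ici, sub_nonneg]; exact hs.2) _
        _ ≤ C * (M * ‖u s‖) :=
            mul_le_mul_of_nonneg_left (hMa (u s)) hCpos.le
        _ = (C * M) * ‖u s‖ := by ring
  have hYB_int : IntervalIntegrable (fun s => TV t (t - s) (u' s)) volume 0 t := by
    rw [intervalIntegrable_iff_integrableOn_Ioc_of_le ht0.le]
    apply Integrable.mono' (g := fun s => C * ‖u' s‖)
    · exact (hu'_t_int.norm.const_mul C)
    · exact aesm_sg_comp (TV t) t hTcont _ hu'_t
    · rw [ae_restrict_iff' measurableSet_Ioc]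
      refine Eventually.of_forall (fun s hs => ?_)
      exact hTop _ (by simp only [mem_Ici, sub_nonneg]; exact hs.2) _
  have hIf_int : IntervalIntegrable (fun s => TV t (t - s) (dualEmb J (f s)))
      volume 0 t := by
    have hcont : ContinuousOn (fun s => TV t (t - s) (dualEmb J (f s))) (Icc 0 t) := by
      apply contOn_sg_comp (TV t) t C hTcont hC
      · intro s hs; simp only [mem_Ici, sub_nonneg]; exact hs.2
      · exact ((dualEmbL J).continuous.comp hf.continuous).continuousOn
    exact hcont.intervalIntegrable_of_Icc ht0.le
  have hsum_int : IntervalIntegrable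
      (fun s => TV t (t - s) ((a t (u s) : V →L[ℂ] ℂ)) + TV t (t - s) (u' s))
      volume 0 t := hY_int.add hYB_int
  -- the main identity
  have mainKey : U t = (∫ s in (0:ℝ)..t, TV t (t - s) ((a t (u s) : V →L[ℂ] ℂ)))
      + (∫ s in (0:ℝ)..t, TV t (t - s) (u' s)) + TV t t (dualEmb J u₀) := by
    have hIooMem : Ioo (0:ℝ) (t/2) ∈ 𝓝[>] (0:ℝ) :=
      Ioo_mem_nhdsGT_of_mem ⟨le_rfl, by linarith⟩
    -- primitives of u and u'
    have hQcont : ContinuousOn (fun x => ∫ r in (0:ℝ)..x, u r) (Icc 0 τ) := by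
      have hIcc : IntegrableOn u (uIcc 0 τ) volume := by
        rw [uIcc_of_le hτ.le]; exact (integrableOn_Icc_iff_integrableOn_Ioc (f := u)).2 hu_int
      have := intervalIntegral.continuousOn_primitive_interval (a := 0) (b := τ)
        (μ := volume) hIcc
      rwa [uIcc_of_le hτ.le] at this
    have hPcont : ContinuousOn (fun x => ∫ r in (0:ℝ)..x, u' r) (Icc 0 τ) := by
      have hIcc : IntegrableOn u' (uIcc 0 τ) volume := by
        rw [uIcc_of_le hτ.le]; exact (integrableOn_Icc_iff_integrableOn_Ioc (f := u')).2 hu'_int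
      have := intervalIntegral.continuousOn_primitive_interval (a := 0) (b := τ)
        (μ := volume) hIcc
      rwa [uIcc_of_le hτ.le] at this
    -- continuity of the Steklov averages
    have hwcont : ∀ h : ℝ, 0 < h → h < t →
        ContinuousOn (fun s => h⁻¹ • ∫ r in s..(s+h), u r) (Icc 0 (t-h)) := by
      intro h hh0 hht
      have hmaps : MapsTo (fun s : ℝ => s + h) (Icc 0 (t-h)) (Icc 0 τ) := by
        intro s hs
        have h1 : (0:ℝ) ≤ s := hs.1
        have h2 : s ≤ t - h := hs.2
        show s + h ∈ Icc 0 τ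
        exact ⟨by linarith, by linarith⟩
      have hc2 : ContinuousOn
          (fun s => h⁻¹ • ((∫ r in (0:ℝ)..(s+h), u r) - ∫ r in (0:ℝ)..s, u r))
          (Icc 0 (t-h)) := by
        apply ContinuousOn.const_smul
        exact ((hQcont.comp ((continuous_id.add continuous_const).continuousOn) hmaps).sub
          (hQcont.mono (Icc_subset_Icc le_rfl (by linarith))))
      apply hc2.congr
      intro s hs
      have hde := intervalIntegral.integral_interval_sub_left
        (hiiu le_rfl (by linarith [hs.1] : (0:ℝ) ≤ s + h) hτ.le
          (by linarith [hs.2] : s + h ≤ τ))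
        (hiiu le_rfl hs.1 hτ.le (by linarith [hs.2] : s ≤ τ))
      simp only [hde]
    have hpcont : ∀ h : ℝ, 0 < h → h < t →
        ContinuousOn (fun s => h⁻¹ • ∫ r in s..(s+h), u' r) (Icc 0 (t-h)) := by
      intro h hh0 hht
      have hmaps : MapsTo (fun s : ℝ => s + h) (Icc 0 (t-h)) (Icc 0 τ) := by
        intro s hs
        have h1 : (0:ℝ) ≤ s := hs.1
        have h2 : s ≤ t - h := hs.2
        show s + h ∈ Icc 0 τ
        exact ⟨by linarith, by linarith⟩
      have hc2 : ContinuousOn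
          (fun s => h⁻¹ • ((∫ r in (0:ℝ)..(s+h), u' r) - ∫ r in (0:ℝ)..s, u' r))
          (Icc 0 (t-h)) := by
        exact ContinuousOn.const_smul
          ((hPcont.comp ((continuous_id.add continuous_const).continuousOn) hmaps).sub
          (hPcont.mono (Icc_subset_Icc le_rfl (by linarith)))) h⁻¹
      apply hc2.congr
      intro s hs
      have hde := intervalIntegral.integral_interval_sub_left
        (hiiu' le_rfl (by linarith [hs.1] : (0:ℝ) ≤ s + h) hτ.le
          (by linarith [hs.2] : s + h ≤ τ))
        (hiiu' le_rfl hs.1 hτ.le (by linarith [hs.2] : s ≤ τ))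
      simp only [hde]
    -- the averaged embedding identity
    have hKavg : ∀ h : ℝ, 0 < h → ∀ s : ℝ, 0 ≤ s → s + h ≤ τ →
        K (h⁻¹ • ∫ r in s..(s+h), u r) = h⁻¹ • ∫ r in s..(s+h), U r := by
      intro h hh0 s hs0 hshτ
      rw [K.map_smul]
      congr 1
      rw [← ContinuousLinearMap.intervalIntegral_comp_comm K
        (hiiu hs0 (by linarith) (by linarith) hshτ)]
      apply intervalIntegral.integral_congr_ae
      filter_upwards [hUu'] with r hr hrmem
      rw [uIoc_of_le (by linarith : s ≤ s + h)] at hrmem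
      rw [hKapp]
      exact (hr ⟨lt_of_le_of_lt hs0 hrmem.1, hrmem.2.trans hshτ⟩).symm
    -- integrability of the h-integrands
    have hXii : ∀ h : ℝ, 0 < h → h < t → IntervalIntegrable
        (fun s => TV t (t - s) ((a t (h⁻¹ • ∫ r in s..(s+h), u r) : V →L[ℂ] ℂ)))
        volume 0 (t-h) := by
      intro h hh0 hht
      have hcont : ContinuousOn
          (fun s => TV t (t - s) ((a t (h⁻¹ • ∫ r in s..(s+h), u r) : V →L[ℂ] ℂ)))
          (Icc 0 (t-h)) := by
        apply contOn_sg_comp (TV t) t C hTcont hC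
        · intro s hs; simp only [mem_Ici, sub_nonneg]; linarith [hs.2]
        · exact (a t).continuous.comp_continuousOn (hwcont h hh0 hht)
      exact hcont.intervalIntegrable_of_Icc (by linarith)
    have hpXii : ∀ h : ℝ, 0 < h → h < t → IntervalIntegrable
        (fun s => TV t (t - s) (h⁻¹ • ∫ r in s..(s+h), u' r)) volume 0 (t-h) := by
      intro h hh0 hht
      have hcont : ContinuousOn
          (fun s => TV t (t - s) (h⁻¹ • ∫ r in s..(s+h), u' r)) (Icc 0 (t-h)) := by
        apply contOn_sg_comp (TV t) t C hTcont hC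
        · intro s hs; simp only [mem_Ici, sub_nonneg]; linarith [hs.2]
        · exact hpcont h hh0 hht
      exact hcont.intervalIntegrable_of_Icc (by linarith)
    -- the fundamental identity for each small h
    have eqn : ∀ h ∈ Ioo (0:ℝ) (t/2),
        (∫ s in (0:ℝ)..(t-h),
          TV t (t - s) ((a t (h⁻¹ • ∫ r in s..(s+h), u r) : V →L[ℂ] ℂ)))
        + (∫ s in (0:ℝ)..(t-h), TV t (t - s) (h⁻¹ • ∫ r in s..(s+h), u' r))
        = TV t (t - (t-h)) (K ((h:ℝ)⁻¹ • ∫ r in (t-h)..((t-h)+h), u r))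
          - TV t (t - 0) (K ((h:ℝ)⁻¹ • ∫ r in (0:ℝ)..(0+h), u r)) := by
      intro h hh
      obtain ⟨hh0, hht2⟩ := hh
      have hht : h < t := by linarith
      have hth : (0:ℝ) < t - h := by linarith
      have hKR : ∀ s ∈ Icc (0:ℝ) (t-h), K (h⁻¹ • ∫ r in s..(s+h), u r)
          = h⁻¹ • ((∫ r in (0:ℝ)..(s+h), U r) - ∫ r in (0:ℝ)..s, U r) := by
        intro s hs
        rw [hKavg h hh0 s hs.1 (by linarith [hs.2])]
        congr 1
        exact (intervalIntegral.integral_interval_sub_left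
          (hiiU le_rfl (by linarith [hs.1]) hτ.le (by linarith [hs.2]))
          (hiiU le_rfl hs.1 hτ.le (by linarith [hs.2]))).symm
      have hGcont : ContinuousOn
          (fun s => TV t (t - s) (K (h⁻¹ • ∫ r in s..(s+h), u r))) (Icc 0 (t-h)) := by
        apply contOn_sg_comp (TV t) t C hTcont hC
        · intro s hs; simp only [mem_Ici, sub_nonneg]; linarith [hs.2]
        · exact K.continuous.comp_continuousOn (hwcont h hh0 hht)
      have hGderiv : ∀ s₀ ∈ Ioo (0:ℝ) (t-h),
          HasDerivAt (fun s => TV t (t - s) (K (h⁻¹ • ∫ r in s..(s+h), u r)))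
            (TV t (t - s₀) ((a t (h⁻¹ • ∫ r in s₀..(s₀+h), u r) : V →L[ℂ] ℂ))
              + TV t (t - s₀) (h⁻¹ • ∫ r in s₀..(s₀+h), u' r)) s₀ := by
        intro s₀ hs₀
        obtain ⟨hs₀0, hs₀th⟩ := hs₀
        have hs₀τ : s₀ < τ := by linarith
        have hs₀hτ : s₀ + h < τ := by linarith
        have hmeasat : ∀ x : ℝ, 0 < x → x < τ →
            StronglyMeasurableAtFilter U (𝓝 x) volume := fun x hx1 hx2 =>
          ⟨Icc 0 τ, Icc_mem_nhds hx1 hx2,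
            hUcont.aestronglyMeasurable measurableSet_Icc⟩
        have hD1 : HasDerivAt (fun x => ∫ r in (0:ℝ)..x, U r) (U s₀) s₀ :=
          intervalIntegral.integral_hasDerivAt_right
            (hiiU le_rfl hs₀0.le hτ.le hs₀τ.le) (hmeasat s₀ hs₀0 hs₀τ)
            (hUcont.continuousAt (Icc_mem_nhds hs₀0 hs₀τ))
        have hD2' : HasDerivAt (fun x => ∫ r in (0:ℝ)..x, U r) (U (s₀+h)) (s₀+h) :=
          intervalIntegral.integral_hasDerivAt_right
            (hiiU le_rfl (by linarith) hτ.le (by linarith)) (hmeasat _ (by linarith) hs₀hτ)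
            (hUcont.continuousAt (Icc_mem_nhds (by linarith) hs₀hτ))
        have hD2 : HasDerivAt (fun x => ∫ r in (0:ℝ)..(x+h), U r) (U (s₀+h)) s₀ := by
          have hcomp := HasDerivAt.scomp (𝕜 := ℝ) s₀ hD2' ((hasDerivAt_id s₀).add_const h)
          simpa [Function.comp_def] using hcomp
        have hRder : HasDerivAt
            (fun s => h⁻¹ • ((∫ r in (0:ℝ)..(s+h), U r) - ∫ r in (0:ℝ)..s, U r))
            (h⁻¹ • (U (s₀+h) - U s₀)) s₀ := (hD2.sub hD1).const_smul h⁻¹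
        have hφder := hRder.sub_const
          (h⁻¹ • ((∫ r in (0:ℝ)..(s₀+h), U r) - ∫ r in (0:ℝ)..s₀, U r))
        have part1 : HasDerivAt
            (fun s => TV t (t - s)
              ((h⁻¹ • ((∫ r in (0:ℝ)..(s+h), U r) - ∫ r in (0:ℝ)..s, U r))
                - h⁻¹ • ((∫ r in (0:ℝ)..(s₀+h), U r) - ∫ r in (0:ℝ)..s₀, U r)))
            (TV t (t - s₀) (h⁻¹ • (U (s₀+h) - U s₀))) s₀ :=
          hasDerivAt_sg_comp (TV t) t C hTcont hC (by linarith : 0 < t - s₀) hφder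
            (sub_self _)
        have base : HasDerivAt
            (fun r => TV t r (dualEmb J (J (h⁻¹ • ∫ r' in s₀..(s₀+h), u r'))))
            (-(TV t (t - s₀) ((a t (h⁻¹ • ∫ r' in s₀..(s₀+h), u r') : V →L[ℂ] ℂ))))
            (t - s₀) :=
          (hTder _ (t - s₀) (by simp only [mem_Ici]; linarith)).hasDerivAt
            (Ici_mem_nhds (by linarith : (0:ℝ) < t - s₀))
        have hneg : HasDerivAt (fun s : ℝ => t - s) (-1 : ℝ) s₀ := by
          simpa using (hasDerivAt_id s₀).const_sub t
        have part2' := HasDerivAt.scomp (𝕜 := ℝ) s₀ base hneg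
        have part2 : HasDerivAt
            (fun s => TV t (t - s) (K (h⁻¹ • ∫ r' in s₀..(s₀+h), u r')))
            (TV t (t - s₀) ((a t (h⁻¹ • ∫ r' in s₀..(s₀+h), u r') : V →L[ℂ] ℂ))) s₀ := by
          have hval : ((-1:ℝ) •
              -(TV t (t - s₀) ((a t (h⁻¹ • ∫ r' in s₀..(s₀+h), u r') : V →L[ℂ] ℂ))))
              = TV t (t - s₀) ((a t (h⁻¹ • ∫ r' in s₀..(s₀+h), u r') : V →L[ℂ] ℂ)) := by
            simp
          rw [← hval]
          exact part2'
        have hsum := part1.add part2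
        have hpd : (h⁻¹ • ∫ r in s₀..(s₀+h), u' r) = h⁻¹ • (U (s₀+h) - U s₀) := by
          rw [hUdiff hs₀0.le (by linarith) hs₀τ.le (by linarith)]
        have hEq : (fun s => TV t (t - s) (K (h⁻¹ • ∫ r in s..(s+h), u r)))
            =ᶠ[𝓝 s₀] (fun s => TV t (t - s)
              ((h⁻¹ • ((∫ r in (0:ℝ)..(s+h), U r) - ∫ r in (0:ℝ)..s, U r))
                - h⁻¹ • ((∫ r in (0:ℝ)..(s₀+h), U r) - ∫ r in (0:ℝ)..s₀, U r))
              + TV t (t - s) (K (h⁻¹ • ∫ r' in s₀..(s₀+h), u r'))) := by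
          filter_upwards [isOpen_Ioo.mem_nhds (⟨hs₀0, hs₀th⟩ : s₀ ∈ Ioo 0 (t-h))] with s hs
          have h1 := hKR s (Ioo_subset_Icc_self hs)
          have h2 := hKR s₀ (Ioo_subset_Icc_self ⟨hs₀0, hs₀th⟩)
          rw [h1, ← map_add]
          congr 1
          rw [h2]
          abel
        have hfinal := hsum.congr_of_eventuallyEq hEq
        rw [hpd]
        have hcomm : TV t (t - s₀) (h⁻¹ • (U (s₀+h) - U s₀))
            + TV t (t - s₀) ((a t (h⁻¹ • ∫ r' in s₀..(s₀+h), u r') : V →L[ℂ] ℂ))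
            = TV t (t - s₀) ((a t (h⁻¹ • ∫ r' in s₀..(s₀+h), u r') : V →L[ℂ] ℂ))
              + TV t (t - s₀) (h⁻¹ • (U (s₀+h) - U s₀)) := add_comm _ _
        rw [← hcomm]
        exact hfinal
      have hderivcont : ContinuousOn
          (fun s => TV t (t - s) ((a t (h⁻¹ • ∫ r in s..(s+h), u r) : V →L[ℂ] ℂ))
            + TV t (t - s) (h⁻¹ • ∫ r in s..(s+h), u' r)) (Icc 0 (t-h)) := by
        apply ContinuousOn.add
        · apply contOn_sg_comp (TV t) t C hTcont hC
          · intro s hs; simp only [mem_Ici, sub_nonneg]; linarith [hs.2]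
          · exact (a t).continuous.comp_continuousOn (hwcont h hh0 hht)
        · apply contOn_sg_comp (TV t) t C hTcont hC
          · intro s hs; simp only [mem_Ici, sub_nonneg]; linarith [hs.2]
          · exact hpcont h hh0 hht
      have hFTC := intervalIntegral.integral_eq_sub_of_hasDeriv_right_of_le
        (by linarith : (0:ℝ) ≤ t - h) hGcont
        (fun s hs => (hGderiv s hs).hasDerivWithinAt)
        (hderivcont.intervalIntegrable_of_Icc (by linarith))
      rw [intervalIntegral.integral_add (hXii h hh0 hht) (hpXii h hh0 hht)] at hFTC
      exact hFTC
    -- limits as h → 0⁺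
    have hUcont_t : ContinuousOn U (Icc 0 t) := hUcont.mono (Icc_subset_Icc le_rfl htτ)
    have lim3 : Tendsto (fun h : ℝ =>
        TV t (t - (t-h)) (K ((h:ℝ)⁻¹ • ∫ r in (t-h)..((t-h)+h), u r)))
        (𝓝[>] (0:ℝ)) (𝓝 (U t)) := by
      have havg : Tendsto (fun h : ℝ => h⁻¹ • ∫ r in (t-h)..t, U r)
          (𝓝[>] (0:ℝ)) (𝓝 (U t)) := tendsto_avg_left ht0 hUcont_t
      have hsg := tendsto_sg_apply (TV t) C hT0 hTcont hC havg
      apply hsg.congr'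
      filter_upwards [hIooMem] with h hh
      obtain ⟨hh0, hht2⟩ := hh
      have h1 : t - (t - h) = h := by ring
      rw [h1]
      congr 1
      rw [hKavg h hh0 (t-h) (by linarith) (by linarith [sub_add_cancel t h])]
      have h2 : (t - h) + h = t := by ring
      rw [h2]
    have lim4 : Tendsto (fun h : ℝ =>
        TV t (t - 0) (K ((h:ℝ)⁻¹ • ∫ r in (0:ℝ)..(0+h), u r)))
        (𝓝[>] (0:ℝ)) (𝓝 (TV t t (dualEmb J u₀))) := by
      have havg : Tendsto (fun h : ℝ => h⁻¹ • ∫ r in (0:ℝ)..h, U r)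
          (𝓝[>] (0:ℝ)) (𝓝 (U 0)) := tendsto_avg_right ht0 hUcont_t
      have hcomp : Tendsto (fun h : ℝ => TV t t (h⁻¹ • ∫ r in (0:ℝ)..h, U r))
          (𝓝[>] (0:ℝ)) (𝓝 (TV t t (U 0))) :=
        ((TV t t).continuous.tendsto _).comp havg
      rw [hU0] at hcomp
      apply hcomp.congr'
      filter_upwards [hIooMem] with h hh
      obtain ⟨hh0, hht2⟩ := hh
      rw [sub_zero]
      congr 1
      rw [hKavg h hh0 0 le_rfl (by linarith)]
      norm_num
    -- tails
    have hNcont : ContinuousOn (fun x => ∫ r in (0:ℝ)..x, ‖u r‖) (Icc 0 τ) := by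
      have hIcc : IntegrableOn (fun r => ‖u r‖) (uIcc 0 τ) volume := by
        rw [uIcc_of_le hτ.le]
        exact (integrableOn_Icc_iff_integrableOn_Ioc (f := fun r => ‖u r‖)).2 hu_int.norm
      have := intervalIntegral.continuousOn_primitive_interval (a := 0) (b := τ)
        (μ := volume) hIcc
      rwa [uIcc_of_le hτ.le] at this
    have hN'cont : ContinuousOn (fun x => ∫ r in (0:ℝ)..x, ‖u' r‖) (Icc 0 τ) := by
      have hIcc : IntegrableOn (fun r => ‖u' r‖) (uIcc 0 τ) volume := by
        rw [uIcc_of_le hτ.le]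
        exact (integrableOn_Icc_iff_integrableOn_Ioc (f := fun r => ‖u' r‖)).2 hu'_int.norm
      have := intervalIntegral.continuousOn_primitive_interval (a := 0) (b := τ)
        (μ := volume) hIcc
      rwa [uIcc_of_le hτ.le] at this
    have htt : Tendsto (fun h : ℝ => t - h) (𝓝[>] (0:ℝ)) (𝓝[Icc 0 τ] t) := by
      apply tendsto_nhdsWithin_of_tendsto_nhds_of_eventually_within
      · have h3 : Tendsto (fun h : ℝ => t - h) (𝓝 0) (𝓝 (t - 0)) :=
          (continuous_const.sub continuous_id).tendsto 0
        rw [sub_zero] at h3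
        exact h3.mono_left nhdsWithin_le_nhds
      · filter_upwards [hIooMem] with h hh
        exact ⟨by linarith [hh.1, hh.2], by linarith [hh.1]⟩
    have hTailu : Tendsto (fun h : ℝ =>
        (∫ r in (0:ℝ)..t, ‖u r‖) - ∫ r in (0:ℝ)..(t-h), ‖u r‖) (𝓝[>] (0:ℝ)) (𝓝 0) := by
      have h2 : Tendsto (fun h : ℝ => ∫ r in (0:ℝ)..(t-h), ‖u r‖) (𝓝[>] (0:ℝ))
          (𝓝 (∫ r in (0:ℝ)..t, ‖u r‖)) := (hNcont t ⟨ht0.le, htτ⟩).tendsto.comp htt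
      have h3 := (tendsto_const_nhds (x := ∫ r in (0:ℝ)..t, ‖u r‖)
        (f := 𝓝[>] (0:ℝ))).sub h2
      rwa [sub_self] at h3
    have hTailu' : Tendsto (fun h : ℝ =>
        (∫ r in (0:ℝ)..t, ‖u' r‖) - ∫ r in (0:ℝ)..(t-h), ‖u' r‖) (𝓝[>] (0:ℝ)) (𝓝 0) := by
      have h2 : Tendsto (fun h : ℝ => ∫ r in (0:ℝ)..(t-h), ‖u' r‖) (𝓝[>] (0:ℝ))
          (𝓝 (∫ r in (0:ℝ)..t, ‖u' r‖)) := (hN'cont t ⟨ht0.le, htτ⟩).tendsto.comp htt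
      have h3 := (tendsto_const_nhds (x := ∫ r in (0:ℝ)..t, ‖u' r‖)
        (f := 𝓝[>] (0:ℝ))).sub h2
      rwa [sub_self] at h3
    have hStu := steklov_tendsto u t ht0 hu_t_int
    have hStu' := steklov_tendsto u' t ht0 hu'_t_int
    -- limit of the first integral
    have lim1 : Tendsto (fun h : ℝ => ∫ s in (0:ℝ)..(t-h),
        TV t (t - s) ((a t (h⁻¹ • ∫ r in s..(s+h), u r) : V →L[ℂ] ℂ)))
        (𝓝[>] (0:ℝ)) (𝓝 (∫ s in (0:ℝ)..t, TV t (t - s) ((a t (u s) : V →L[ℂ] ℂ)))) := by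
      rw [← tendsto_sub_nhds_zero_iff]
      apply squeeze_zero_norm' (a := fun h : ℝ =>
        (C*M) * (∫ s in Ioc 0 (t-h), ‖(h⁻¹ • ∫ r in s..(s+h), u r) - u s‖)
        + (C*M) * ((∫ r in (0:ℝ)..t, ‖u r‖) - ∫ r in (0:ℝ)..(t-h), ‖u r‖))
      · filter_upwards [hIooMem] with h hh
        obtain ⟨hh0, hht2⟩ := hh
        have hht : h < t := by linarith
        have hth0 : (0:ℝ) ≤ t - h := by linarith
        have hsub1 : uIcc (0:ℝ) (t-h) ⊆ uIcc (0:ℝ) t := by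
          rw [uIcc_of_le hth0, uIcc_of_le ht0.le]
          exact Icc_subset_Icc le_rfl (by linarith)
        have hsub2 : uIcc (t-h) t ⊆ uIcc (0:ℝ) t := by
          rw [uIcc_of_le (by linarith : t-h ≤ t), uIcc_of_le ht0.le]
          exact Icc_subset_Icc hth0 le_rfl
        have hY1 : IntervalIntegrable (fun s => TV t (t - s) ((a t (u s) : V →L[ℂ] ℂ)))
            volume 0 (t-h) := hY_int.mono_set hsub1
        have hY2 : IntervalIntegrable (fun s => TV t (t - s) ((a t (u s) : V →L[ℂ] ℂ)))
            volume (t-h) t := hY_int.mono_set hsub2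
        have hsplit : (∫ s in (0:ℝ)..t, TV t (t - s) ((a t (u s) : V →L[ℂ] ℂ)))
            = (∫ s in (0:ℝ)..(t-h), TV t (t - s) ((a t (u s) : V →L[ℂ] ℂ)))
              + ∫ s in (t-h)..t, TV t (t - s) ((a t (u s) : V →L[ℂ] ℂ)) :=
          (intervalIntegral.integral_add_adjacent_intervals hY1 hY2).symm
        have hdiff : (∫ s in (0:ℝ)..(t-h),
              TV t (t - s) ((a t (h⁻¹ • ∫ r in s..(s+h), u r) : V →L[ℂ] ℂ)))
              - (∫ s in (0:ℝ)..t, TV t (t - s) ((a t (u s) : V →L[ℂ] ℂ)))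
            = (∫ s in (0:ℝ)..(t-h),
                (TV t (t - s) ((a t (h⁻¹ • ∫ r in s..(s+h), u r) : V →L[ℂ] ℂ))
                  - TV t (t - s) ((a t (u s) : V →L[ℂ] ℂ))))
              - ∫ s in (t-h)..t, TV t (t - s) ((a t (u s) : V →L[ℂ] ℂ)) := by
          rw [hsplit, intervalIntegral.integral_sub (hXii h hh0 hht) hY1]
          abel
        rw [hdiff]
        have hbd1 : ‖∫ s in (0:ℝ)..(t-h),
            (TV t (t - s) ((a t (h⁻¹ • ∫ r in s..(s+h), u r) : V →L[ℂ] ℂ))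
              - TV t (t - s) ((a t (u s) : V →L[ℂ] ℂ)))‖
            ≤ (C*M) * ∫ s in Ioc 0 (t-h), ‖(h⁻¹ • ∫ r in s..(s+h), u r) - u s‖ := by
          have h4 := intervalIntegral.norm_integral_le_integral_norm
            (f := fun s => TV t (t - s) ((a t (h⁻¹ • ∫ r in s..(s+h), u r) : V →L[ℂ] ℂ))
              - TV t (t - s) ((a t (u s) : V →L[ℂ] ℂ))) (μ := volume) hth0
          refine h4.trans ?_
          rw [intervalIntegral.integral_of_le hth0, ← integral_const_mul]
          apply setIntegral_mono_on
          · have := ((hXii h hh0 hht).sub hY1)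
            rw [intervalIntegrable_iff_integrableOn_Ioc_of_le hth0] at this
            exact this.norm
          · apply Integrable.const_mul
            have hwint : IntegrableOn (fun s => (h⁻¹ • ∫ r in s..(s+h), u r))
                (Ioc 0 (t-h)) volume := by
              apply ((hwcont h hh0 hht).integrableOn_Icc).mono_set Ioc_subset_Icc_self
            exact (hwint.sub
              (hu_t_int.mono_set (Ioc_subset_Ioc_right (by linarith)))).norm
          · exact measurableSet_Ioc
          · intro s hs
            have hts : t - s ∈ Ici (0:ℝ) := by
              simp only [mem_Ici, sub_nonneg]; linarith [hs.2]
            have e1 : TV t (t - s) ((a t (h⁻¹ • ∫ r in s..(s+h), u r) : V →L[ℂ] ℂ))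
                - TV t (t - s) ((a t (u s) : V →L[ℂ] ℂ))
                = TV t (t - s) ((a t ((h⁻¹ • ∫ r in s..(s+h), u r) - u s) : V →L[ℂ] ℂ)) := by
              rw [← map_sub, ← map_sub]
            simp only [e1]
            calc ‖TV t (t - s) ((a t ((h⁻¹ • ∫ r in s..(s+h), u r) - u s) : V →L[ℂ] ℂ))‖
                ≤ C * ‖(a t ((h⁻¹ • ∫ r in s..(s+h), u r) - u s) : V →L[ℂ] ℂ)‖ :=
                  hTop _ hts _
              _ ≤ C * (M * ‖(h⁻¹ • ∫ r in s..(s+h), u r) - u s‖) :=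
                  mul_le_mul_of_nonneg_left (hMa _) hCpos.le
              _ = (C*M) * ‖(h⁻¹ • ∫ r in s..(s+h), u r) - u s‖ := by ring
        have hbd2 : ‖∫ s in (t-h)..t, TV t (t - s) ((a t (u s) : V →L[ℂ] ℂ))‖
            ≤ (C*M) * ((∫ r in (0:ℝ)..t, ‖u r‖) - ∫ r in (0:ℝ)..(t-h), ‖u r‖) := by
          have h4 := intervalIntegral.norm_integral_le_integral_norm
            (f := fun s => TV t (t - s) ((a t (u s) : V →L[ℂ] ℂ))) (μ := volume)
            (by linarith : t - h ≤ t)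
          refine h4.trans ?_
          have h5 : (∫ s in (t-h)..t, ‖TV t (t - s) ((a t (u s) : V →L[ℂ] ℂ))‖)
              ≤ ∫ s in (t-h)..t, (C*M) * ‖u s‖ := by
            apply intervalIntegral.integral_mono_on (by linarith : t - h ≤ t)
            · exact hY2.norm
            · exact ((hiiu hth0 ht0.le (by linarith) htτ).norm).const_mul (C*M)
            · intro x hx
              have htx : t - x ∈ Ici (0:ℝ) := by
                simp only [mem_Ici, sub_nonneg]; exact hx.2
              calc ‖TV t (t - x) ((a t (u x) : V →L[ℂ] ℂ))‖
                  ≤ C * ‖(a t (u x) : V →L[ℂ] ℂ)‖ := hTop _ htx _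
                _ ≤ C * (M * ‖u x‖) := mul_le_mul_of_nonneg_left (hMa _) hCpos.le
                _ = (C*M) * ‖u x‖ := by ring
          refine h5.trans ?_
          rw [intervalIntegral.integral_const_mul]
          apply mul_le_mul_of_nonneg_left _ (by positivity)
          rw [intervalIntegral.integral_interval_sub_left
            ((hiiu le_rfl ht0.le hτ.le htτ).norm)
            ((hiiu le_rfl hth0 hτ.le (by linarith)).norm)]
        calc ‖(∫ s in (0:ℝ)..(t-h),
              (TV t (t - s) ((a t (h⁻¹ • ∫ r in s..(s+h), u r) : V →L[ℂ] ℂ))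
                - TV t (t - s) ((a t (u s) : V →L[ℂ] ℂ))))
              - ∫ s in (t-h)..t, TV t (t - s) ((a t (u s) : V →L[ℂ] ℂ))‖
            ≤ _ + _ := norm_sub_le _ _
          _ ≤ (C*M) * (∫ s in Ioc 0 (t-h), ‖(h⁻¹ • ∫ r in s..(s+h), u r) - u s‖)
              + (C*M) * ((∫ r in (0:ℝ)..t, ‖u r‖) - ∫ r in (0:ℝ)..(t-h), ‖u r‖) :=
            add_le_add hbd1 hbd2
      · have h6 := ((tendsto_const_nhds (x := C*M) (f := 𝓝[>] (0:ℝ))).mul hStu).add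
          ((tendsto_const_nhds (x := C*M) (f := 𝓝[>] (0:ℝ))).mul hTailu)
        simpa using h6
    -- limit of the second integral
    have lim2 : Tendsto (fun h : ℝ => ∫ s in (0:ℝ)..(t-h),
        TV t (t - s) (h⁻¹ • ∫ r in s..(s+h), u' r))
        (𝓝[>] (0:ℝ)) (𝓝 (∫ s in (0:ℝ)..t, TV t (t - s) (u' s))) := by
      rw [← tendsto_sub_nhds_zero_iff]
      apply squeeze_zero_norm' (a := fun h : ℝ =>
        C * (∫ s in Ioc 0 (t-h), ‖(h⁻¹ • ∫ r in s..(s+h), u' r) - u' s‖)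
        + C * ((∫ r in (0:ℝ)..t, ‖u' r‖) - ∫ r in (0:ℝ)..(t-h), ‖u' r‖))
      · filter_upwards [hIooMem] with h hh
        obtain ⟨hh0, hht2⟩ := hh
        have hht : h < t := by linarith
        have hth0 : (0:ℝ) ≤ t - h := by linarith
        have hsub1 : uIcc (0:ℝ) (t-h) ⊆ uIcc (0:ℝ) t := by
          rw [uIcc_of_le hth0, uIcc_of_le ht0.le]
          exact Icc_subset_Icc le_rfl (by linarith)
        have hsub2 : uIcc (t-h) t ⊆ uIcc (0:ℝ) t := by
          rw [uIcc_of_le (by linarith : t-h ≤ t), uIcc_of_le ht0.le]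
          exact Icc_subset_Icc hth0 le_rfl
        have hY1 : IntervalIntegrable (fun s => TV t (t - s) (u' s))
            volume 0 (t-h) := hYB_int.mono_set hsub1
        have hY2 : IntervalIntegrable (fun s => TV t (t - s) (u' s))
            volume (t-h) t := hYB_int.mono_set hsub2
        have hsplit : (∫ s in (0:ℝ)..t, TV t (t - s) (u' s))
            = (∫ s in (0:ℝ)..(t-h), TV t (t - s) (u' s))
              + ∫ s in (t-h)..t, TV t (t - s) (u' s) :=
          (intervalIntegral.integral_add_adjacent_intervals hY1 hY2).symm
        have hdiff : (∫ s in (0:ℝ)..(t-h), TV t (t - s) (h⁻¹ • ∫ r in s..(s+h), u' r))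
              - (∫ s in (0:ℝ)..t, TV t (t - s) (u' s))
            = (∫ s in (0:ℝ)..(t-h),
                (TV t (t - s) (h⁻¹ • ∫ r in s..(s+h), u' r) - TV t (t - s) (u' s)))
              - ∫ s in (t-h)..t, TV t (t - s) (u' s) := by
          rw [hsplit, intervalIntegral.integral_sub (hpXii h hh0 hht) hY1]
          abel
        rw [hdiff]
        have hbd1 : ‖∫ s in (0:ℝ)..(t-h),
            (TV t (t - s) (h⁻¹ • ∫ r in s..(s+h), u' r) - TV t (t - s) (u' s))‖
            ≤ C * ∫ s in Ioc 0 (t-h), ‖(h⁻¹ • ∫ r in s..(s+h), u' r) - u' s‖ := by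
          have h4 := intervalIntegral.norm_integral_le_integral_norm
            (f := fun s => TV t (t - s) (h⁻¹ • ∫ r in s..(s+h), u' r)
              - TV t (t - s) (u' s)) (μ := volume) hth0
          refine h4.trans ?_
          rw [intervalIntegral.integral_of_le hth0, ← integral_const_mul]
          apply setIntegral_mono_on
          · have := ((hpXii h hh0 hht).sub hY1)
            rw [intervalIntegrable_iff_integrableOn_Ioc_of_le hth0] at this
            exact this.norm
          · apply Integrable.const_mul
            have hwint : IntegrableOn (fun s => (h⁻¹ • ∫ r in s..(s+h), u' r))
                (Ioc 0 (t-h)) volume := by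
              apply ((hpcont h hh0 hht).integrableOn_Icc).mono_set Ioc_subset_Icc_self
            exact (hwint.sub
              (hu'_t_int.mono_set (Ioc_subset_Ioc_right (by linarith)))).norm
          · exact measurableSet_Ioc
          · intro s hs
            have hts : t - s ∈ Ici (0:ℝ) := by
              simp only [mem_Ici, sub_nonneg]; linarith [hs.2]
            have e1 : TV t (t - s) (h⁻¹ • ∫ r in s..(s+h), u' r) - TV t (t - s) (u' s)
                = TV t (t - s) ((h⁻¹ • ∫ r in s..(s+h), u' r) - u' s) := by
              rw [← map_sub]
            simp only [e1]
            exact hTop _ hts _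
        have hbd2 : ‖∫ s in (t-h)..t, TV t (t - s) (u' s)‖
            ≤ C * ((∫ r in (0:ℝ)..t, ‖u' r‖) - ∫ r in (0:ℝ)..(t-h), ‖u' r‖) := by
          have h4 := intervalIntegral.norm_integral_le_integral_norm
            (f := fun s => TV t (t - s) (u' s)) (μ := volume)
            (by linarith : t - h ≤ t)
          refine h4.trans ?_
          have h5 : (∫ s in (t-h)..t, ‖TV t (t - s) (u' s)‖)
              ≤ ∫ s in (t-h)..t, C * ‖u' s‖ := by
            apply intervalIntegral.integral_mono_on (by linarith : t - h ≤ t)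
            · exact hY2.norm
            · exact ((hiiu' hth0 ht0.le (by linarith) htτ).norm).const_mul C
            · intro x hx
              have htx : t - x ∈ Ici (0:ℝ) := by
                simp only [mem_Ici, sub_nonneg]; exact hx.2
              exact hTop _ htx _
          refine h5.trans ?_
          rw [intervalIntegral.integral_const_mul]
          apply mul_le_mul_of_nonneg_left _ hCpos.le
          rw [intervalIntegral.integral_interval_sub_left
            ((hiiu' le_rfl ht0.le hτ.le htτ).norm)
            ((hiiu' le_rfl hth0 hτ.le (by linarith)).norm)]
        calc ‖(∫ s in (0:ℝ)..(t-h),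
              (TV t (t - s) (h⁻¹ • ∫ r in s..(s+h), u' r) - TV t (t - s) (u' s)))
              - ∫ s in (t-h)..t, TV t (t - s) (u' s)‖
            ≤ _ + _ := norm_sub_le _ _
          _ ≤ C * (∫ s in Ioc 0 (t-h), ‖(h⁻¹ • ∫ r in s..(s+h), u' r) - u' s‖)
              + C * ((∫ r in (0:ℝ)..t, ‖u' r‖) - ∫ r in (0:ℝ)..(t-h), ‖u' r‖) :=
            add_le_add hbd1 hbd2
      · have h6 := ((tendsto_const_nhds (x := C) (f := 𝓝[>] (0:ℝ))).mul hStu').add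
          ((tendsto_const_nhds (x := C) (f := 𝓝[>] (0:ℝ))).mul hTailu')
        simpa using h6
    -- combine
    have hfin : (∫ s in (0:ℝ)..t, TV t (t - s) ((a t (u s) : V →L[ℂ] ℂ)))
        + (∫ s in (0:ℝ)..t, TV t (t - s) (u' s))
        = U t - TV t t (dualEmb J u₀) := by
      refine tendsto_nhds_unique ((lim1.add lim2).congr' ?_) (lim3.sub lim4)
      filter_upwards [hIooMem] with h hh
      exact eqn h hh
    rw [eq_sub_iff_add_eq] at hfin
    rw [← hfin]
  -- conversion to the stated form
  have hconv : (∫ s in (0:ℝ)..t, TV t (t - s) ((a t (u s) : V →L[ℂ] ℂ) - a s (u s)))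
      = (∫ s in (0:ℝ)..t,
          (TV t (t - s) ((a t (u s) : V →L[ℂ] ℂ)) + TV t (t - s) (u' s)))
        - ∫ s in (0:ℝ)..t, TV t (t - s) (dualEmb J (f s)) := by
    rw [← intervalIntegral.integral_sub hsum_int hIf_int]
    apply intervalIntegral.integral_congr_ae
    filter_upwards [heq'] with s hs hmem
    rw [uIoc_of_le ht0.le] at hmem
    have h1 := hs ⟨hmem.1, hmem.2.trans htτ⟩
    have h2 : (a s (u s) : V →L[ℂ] ℂ) = dualEmb J (f s) - u' s := by
      rw [← h1]; abel
    rw [h2]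
    rw [← map_add, ← map_sub]
    congr 1
    abel
  rw [hconv, intervalIntegral.integral_add hY_int hYB_int, mainKey]
  abel
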